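/- Let H be a bialgebra, A a left H-module algebra, and F a normalized cocycle twist. Then for generators of mixed type, φ((1_A⋊L)⋆_F(b⋊J)) = φ(1_A⋊L)⋆φ(b⋊J), where explicitly (1_A⋊L)⋆_F(b⋊J) = (F₁L₍₁₎F̄₁'▷b)⋊F₂L₍₂₎F̄₂'J in A_F⋊H^F and φ(a⋊L) = (F̄₁▷a)⋊F̄₂L. -/
import Mathlib


open TensorProduct

/-- Embedding of `H ⊗ H` into the first and second factors of `H ⊗ H ⊗ H`. -/
noncomputable def leg12 (K H : Type) [CommRing K] [Ring H] [Algebra K H] :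
    H ⊗[K] H →ₐ[K] H ⊗[K] (H ⊗[K] H) :=
  Algebra.TensorProduct.map (AlgHom.id K H) Algebra.TensorProduct.includeLeft

/-- Embedding of `H ⊗ H` into the second and third factors of `H ⊗ H ⊗ H`. -/
noncomputable def leg23 (K H : Type) [CommRing K] [Ring H] [Algebra K H] :
    H ⊗[K] H →ₐ[K] H ⊗[K] (H ⊗[K] H) :=
  Algebra.TensorProduct.includeRight

/-- Embedding of `H ⊗ H` into the first and third factors of `H ⊗ H ⊗ H`. -/
noncomputable def leg13 (K H : Type) [CommRing K] [Ring H] [Algebra K H] :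
    H ⊗[K] H →ₐ[K] H ⊗[K] (H ⊗[K] H) :=
  Algebra.TensorProduct.map (AlgHom.id K H) Algebra.TensorProduct.includeRight

/-- `Δ ⊗ id` as a map `H ⊗ H → H ⊗ (H ⊗ H)`. -/
noncomputable def copL (K H : Type) [CommRing K] [Ring H] [Bialgebra K H] :
    H ⊗[K] H →ₗ[K] H ⊗[K] (H ⊗[K] H) :=
  (TensorProduct.assoc K H H H).toLinearMap ∘ₗ
    TensorProduct.map Coalgebra.comul LinearMap.id

/-- `id ⊗ Δ` as a map `H ⊗ H → H ⊗ (H ⊗ H)`. -/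
noncomputable def copR (K H : Type) [CommRing K] [Ring H] [Bialgebra K H] :
    H ⊗[K] H →ₗ[K] H ⊗[K] (H ⊗[K] H) :=
  TensorProduct.map LinearMap.id Coalgebra.comul

/-- `ε ⊗ id : H ⊗ H → H`. -/
noncomputable def ctL (K H : Type) [CommRing K] [Ring H] [Bialgebra K H] :
    H ⊗[K] H →ₗ[K] H :=
  (TensorProduct.lid K H).toLinearMap ∘ₗ TensorProduct.map Coalgebra.counit LinearMap.id

/-- `id ⊗ ε : H ⊗ H → H`. -/
noncomputable def ctR (K H : Type) [CommRing K] [Ring H] [Bialgebra K H] :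
    H ⊗[K] H →ₗ[K] H :=
  (TensorProduct.rid K H).toLinearMap ∘ₗ TensorProduct.map LinearMap.id Coalgebra.counit
/-- The twisted star product `a ⋆_F b = (F̄₁ ▷ a) · (F̄₂ ▷ b)` determined by the
action `act` and the inverse twist `Finv`. -/
noncomputable def starF {K H A : Type} [CommRing K] [Ring H] [Bialgebra K H]
    [Ring A] [Algebra K A]
    (act : H →ₗ[K] A →ₗ[K] A) (Finv : H ⊗[K] H) (a b : A) : A :=
  LinearMap.mul' K A ((TensorProduct.map (act.flip a) (act.flip b)) Finv)

/-- For `G = Σ G₁ ⊗ G₂ ∈ H ⊗ H`, the element `Σ (G₂ ▷ a) ⊗ G₁` of `A ⊗ H`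
(e.g. the target map `t(a) = (R₂ ▷ a) ⋊ R₁` of the smash product bialgebroid). -/
noncomputable def tmap {K H A : Type} [CommRing K] [Ring H] [Bialgebra K H]
    [Ring A] [Algebra K A]
    (act : H →ₗ[K] A →ₗ[K] A) (a : A) (G : H ⊗[K] H) : A ⊗[K] H :=
  (TensorProduct.comm K H A) ((TensorProduct.map LinearMap.id (act.flip a)) G)

/-- The bialgebroid counit `ε̃(a ⋊ L) = ε(L) a` of the smash product `A ⋊ H`. -/
noncomputable def epsSm (K H A : Type) [CommRing K] [Ring H] [Bialgebra K H]
    [Ring A] [Algebra K A] : A ⊗[K] H →ₗ[K] A :=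
  (TensorProduct.rid K A).toLinearMap ∘ₗ TensorProduct.map LinearMap.id Coalgebra.counit


lemma exists_fin_sum_tmul {R M N : Type*} [CommSemiring R] [AddCommMonoid M] [AddCommMonoid N]
    [Module R M] [Module R N] (x : M ⊗[R] N) :
    ∃ (n : ℕ) (f : Fin n → M) (g : Fin n → N), x = ∑ i, f i ⊗ₜ[R] g i := by
  induction x with
  | zero => exact ⟨0, ![], ![], by simp⟩
  | tmul a b => exact ⟨1, ![a], ![b], by simp⟩
  | add x y hx hy =>
    obtain ⟨n, f, g, hx⟩ := hx
    obtain ⟨n', f', g', hy⟩ := hy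
    refine ⟨n + n', Fin.append f f', Fin.append g g', ?_⟩
    rw [Fin.sum_univ_add]
    simp [hx, hy, Fin.append_left, Fin.append_right]

lemma ctL_tmul (K H : Type) [CommRing K] [Ring H] [Bialgebra K H] (a b : H) :
    ctL K H (a ⊗ₜ[K] b) = Coalgebra.counit (R := K) a • b := by
  simp [ctL]

lemma ctL_mul (K H : Type) [CommRing K] [Ring H] [Bialgebra K H] (x y : H ⊗[K] H) :
    ctL K H (x * y) = ctL K H x * ctL K H y := by
  induction x with
  | zero => simp
  | add x x' hx hx' => simp [add_mul, hx, hx']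
  | tmul a b =>
    induction y with
    | zero => simp
    | add y y' hy hy' => simp [mul_add, hy, hy']
    | tmul c d =>
      rw [Algebra.TensorProduct.tmul_mul_tmul, ctL_tmul, ctL_tmul, ctL_tmul,
        Bialgebra.counit_mul, smul_mul_smul_comm]

/-- on mixed generators, `φ((1 ⋊ L) ⋆_F (b ⋊ J)) = φ(1 ⋊ L) ⋆ φ(b ⋊ J)`,
where explicitly `(1 ⋊ L) ⋆_F (b ⋊ J) = (F₁L₍₁₎F̄₁' ▷ b) ⋊ F₂L₍₂₎F̄₂'J`. -/
theorem twist_isomorphism_on_mixed_generators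
    {K H A : Type} [CommRing K] [Ring H] [Bialgebra K H] [Ring A] [Algebra K A]
    (act : H →ₗ[K] A →ₗ[K] A)
    (hact_one : ∀ a : A, act 1 a = a)
    (hact_mul : ∀ (L J : H) (a : A), act (L * J) a = act L (act J a))
    (hact_unit : ∀ L : H, act L (1 : A) = Coalgebra.counit (R := K) L • (1 : A))
    (hact_alg : ∀ (L : H) (a b : A) (n : ℕ) (L1 L2 : Fin n → H),
      Coalgebra.comul (R := K) L = ∑ i, L1 i ⊗ₜ[K] L2 i →
      act L (a * b) = ∑ i, act (L1 i) a * act (L2 i) b)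
    -- F is a normalized cocycle twist
    (F Finv : H ⊗[K] H)
    (hinv₁ : F * Finv = 1) (hinv₂ : Finv * F = 1)
    (hcoc : leg12 K H F * copL K H F = leg23 K H F * copR K H F)
    (hnorm₁ : ctL K H F = 1) (hnorm₂ : ctR K H F = 1)
    -- the smash product multiplication of A ⋊ H
    (m : (A ⊗[K] H) →ₗ[K] (A ⊗[K] H) →ₗ[K] (A ⊗[K] H))
    (hm : ∀ (a b : A) (L J : H) (n : ℕ) (L1 L2 : Fin n → H),
      Coalgebra.comul (R := K) L = ∑ i, L1 i ⊗ₜ[K] L2 i →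
      m (a ⊗ₜ[K] L) (b ⊗ₜ[K] J) = ∑ i, (a * act (L1 i) b) ⊗ₜ[K] (L2 i * J))
    -- the smash product multiplication of A_F ⋊ H^F
    (mF : (A ⊗[K] H) →ₗ[K] (A ⊗[K] H) →ₗ[K] (A ⊗[K] H))
    (hmF : ∀ (a b : A) (L J : H) (n : ℕ) (L1 L2 : Fin n → H),
      F * Coalgebra.comul (R := K) L * Finv = ∑ i, L1 i ⊗ₜ[K] L2 i →
      mF (a ⊗ₜ[K] L) (b ⊗ₜ[K] J) =
        ∑ i, starF act Finv a (act (L1 i) b) ⊗ₜ[K] (L2 i * J))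
    -- the map φ
    (φ : A ⊗[K] H →ₗ[K] A ⊗[K] H)
    (hφ : ∀ (a : A) (L : H) (n : ℕ) (g1 g2 : Fin n → H),
      Finv = ∑ i, g1 i ⊗ₜ[K] g2 i →
      φ (a ⊗ₜ[K] L) = ∑ i, act (g1 i) a ⊗ₜ[K] (g2 i * L)) :
    ∀ (b : A) (L J : H),
      -- explicit form:  (1 ⋊ L) ⋆_F (b ⋊ J) = (F₁L₍₁₎F̄₁' ▷ b) ⋊ F₂L₍₂₎F̄₂'J
      mF ((1 : A) ⊗ₜ[K] L) (b ⊗ₜ[K] J) =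
        (TensorProduct.map (act.flip b) (LinearMap.mulRight K J))
          (F * Coalgebra.comul (R := K) L * Finv) ∧
      -- φ intertwines the products on mixed generators
      φ (mF ((1 : A) ⊗ₜ[K] L) (b ⊗ₜ[K] J)) =
        m (φ ((1 : A) ⊗ₜ[K] L)) (φ (b ⊗ₜ[K] J)) := by
  intro b L J
  -- fix a finite presentation of Finv
  obtain ⟨n, g1, g2, hg⟩ := exists_fin_sum_tmul Finv
  -- εₗ(Finv) = 1
  have hct1 : ctL K H (1 : H ⊗[K] H) = 1 := by
    rw [Algebra.TensorProduct.one_def, ctL_tmul]; simp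
  have hctFinv : ctL K H Finv = 1 := by
    have h := ctL_mul K H F Finv
    rw [hinv₁, hnorm₁, one_mul, hct1] at h
    exact h.symm
  -- 1 ⋆_F c = c
  have hstar : ∀ x : A, starF act Finv 1 x = x := by
    intro x
    rw [starF, hg, map_sum, map_sum]
    simp only [TensorProduct.map_tmul, LinearMap.flip_apply, LinearMap.mul'_apply]
    simp_rw [hact_unit, smul_mul_assoc, one_mul]
    have h2 : ∑ i, Coalgebra.counit (R := K) (g1 i) • act (g2 i) x
        = act (ctL K H Finv) x := by
      rw [hg, map_sum]
      simp only [map_sum, ctL_tmul, map_smul, LinearMap.smul_apply, LinearMap.sum_apply]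
    rw [h2, hctFinv, hact_one]
  -- presentations of F Δ(L) Finv and of Δ(L)
  obtain ⟨p, P1, P2, hP⟩ := exists_fin_sum_tmul (F * Coalgebra.comul (R := K) L * Finv)
  obtain ⟨q, Q1, Q2, hQ⟩ := exists_fin_sum_tmul (Coalgebra.comul (R := K) L)
  have key : Finv * (F * Coalgebra.comul (R := K) L * Finv)
      = Coalgebra.comul (R := K) L * Finv := by
    rw [← mul_assoc, ← mul_assoc, hinv₂, one_mul]
  constructor
  · rw [hmF 1 b L J p P1 P2 hP, hP, map_sum]
    simp only [TensorProduct.map_tmul, LinearMap.flip_apply, LinearMap.mulRight_apply, hstar]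
  · have lhs_eq : φ (mF ((1 : A) ⊗ₜ[K] L) (b ⊗ₜ[K] J)) =
        (TensorProduct.map (act.flip b) (LinearMap.mulRight K J))
          (Coalgebra.comul (R := K) L * Finv) := by
      rw [hmF 1 b L J p P1 P2 hP, map_sum]
      have step : ∀ i, φ (starF act Finv 1 (act (P1 i) b) ⊗ₜ[K] (P2 i * J)) =
          ∑ j, act (g1 j * P1 i) b ⊗ₜ[K] ((g2 j * P2 i) * J) := by
        intro i
        rw [hstar, hφ _ _ n g1 g2 hg]
        exact Finset.sum_congr rfl fun j _ => by rw [hact_mul, mul_assoc]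
      simp_rw [step]
      rw [← key, hP, hg, Finset.sum_mul_sum, map_sum]
      simp only [map_sum, Algebra.TensorProduct.tmul_mul_tmul, TensorProduct.map_tmul,
        LinearMap.flip_apply, LinearMap.mulRight_apply]
      exact Finset.sum_comm
    have rhs1 : φ ((1 : A) ⊗ₜ[K] L) = (1 : A) ⊗ₜ[K] L := by
      rw [hφ _ _ n g1 g2 hg]
      have h3 : ∀ j, act (g1 j) (1 : A) ⊗ₜ[K] (g2 j * L)
          = (1 : A) ⊗ₜ[K] (Coalgebra.counit (R := K) (g1 j) • (g2 j * L)) := by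
        intro j
        rw [hact_unit, TensorProduct.smul_tmul]
      simp_rw [h3]
      rw [← TensorProduct.tmul_sum]
      congr 1
      have h4 : ∑ j, Coalgebra.counit (R := K) (g1 j) • (g2 j * L)
          = ctL K H Finv * L := by
        rw [hg, map_sum, Finset.sum_mul]
        simp only [ctL_tmul, smul_mul_assoc]
      rw [h4, hctFinv, one_mul]
    have rhs_eq : m (φ ((1 : A) ⊗ₜ[K] L)) (φ (b ⊗ₜ[K] J)) =
        (TensorProduct.map (act.flip b) (LinearMap.mulRight K J))
          (Coalgebra.comul (R := K) L * Finv) := by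
      rw [rhs1, hφ b J n g1 g2 hg, map_sum]
      have step : ∀ j, m ((1 : A) ⊗ₜ[K] L) (act (g1 j) b ⊗ₜ[K] (g2 j * J)) =
          ∑ i, act (Q1 i * g1 j) b ⊗ₜ[K] ((Q2 i * g2 j) * J) := by
        intro j
        rw [hm 1 (act (g1 j) b) L (g2 j * J) q Q1 Q2 hQ]
        exact Finset.sum_congr rfl fun i _ => by rw [one_mul, ← hact_mul, ← mul_assoc]
      simp_rw [step]
      rw [hQ, hg, Finset.sum_mul_sum, map_sum]
      simp only [map_sum, Algebra.TensorProduct.tmul_mul_tmul, TensorProduct.map_tmul,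
        LinearMap.flip_apply, LinearMap.mulRight_apply]
      exact Finset.sum_comm
    rw [lhs_eq, rhs_eq]
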